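/- Let r ≥ 0 be an integer, ε > 0, and let (h_j) be 2K-periodic positive element sizes with h_j ≥ (2r+1)ε for all j. Define the lumped weights ω̄_j = (h_j + h_{j+1})/(2(2r+1)), the right-hand side g_j = ½(h_j + h_{j+1}), and the residual ρ_j = (M ω̄)_j − g_j, where M is the 2K-periodic tridiagonal exactness matrix. Then ρ_j = (ω̄_{j−1} − ω̄_j) · ½ r(r+1) ε/h_j + (ω̄_{j+1} − ω̄_j) · ½ r(r+1) ε/h_{j+1} for every j; ρ = 0 if the mesh is uniform or if r = 0; and if the mesh is κ-regular for some κ ≥ 1, then there is a constant C depending only on κ such that max_j |ρ_j| ≤ C ε r. -/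

import Mathlib

lemma key17 (κ ε h hl hr : ℝ) (r : ℕ) (hκ : 1 ≤ κ) (hε : 0 < ε) (hh : 0 < h)
    (hhl : 0 < hl) (hhr : 0 < hr) (h1 : hl ≤ κ * h) (h2 : hr ≤ κ * h) :
    |(hl - hr) / (2 * (2 * (r : ℝ) + 1)) * (((r : ℝ) * ((r : ℝ) + 1) / 2) * ε / h)| ≤
      κ * ε * (r : ℝ) / 2 := by
  have hr1 : (0:ℝ) < 2 * (2 * (r : ℝ) + 1) := by positivity
  have hq : 0 ≤ ((r : ℝ) * ((r : ℝ) + 1) / 2) * ε / h := by positivity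
  have hd : |hl - hr| ≤ κ * h := by
    rw [abs_sub_le_iff]
    constructor <;> nlinarith
  rw [abs_mul, abs_div, abs_of_pos hr1, abs_of_nonneg hq]
  calc |hl - hr| / (2 * (2 * (r : ℝ) + 1)) * (((r : ℝ) * ((r : ℝ) + 1) / 2) * ε / h)
      ≤ (κ * h) / (2 * (2 * (r : ℝ) + 1)) * (((r : ℝ) * ((r : ℝ) + 1) / 2) * ε / h) := by
        gcongr
    _ = κ * ε * ((r : ℝ) * ((r : ℝ) + 1)) / (4 * (2 * (r : ℝ) + 1)) := by
        field_simp; ring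
    _ ≤ κ * ε * (r : ℝ) / 2 := by
        rw [div_le_div_iff₀ (by positivity) (by norm_num)]
        have : (0:ℝ) ≤ κ * ε * (r : ℝ) := by positivity
        nlinarith

theorem statement17 (κ : ℝ) (hκ : 1 ≤ κ) :
    ∃ C : ℝ, 0 < C ∧
      ∀ (K : ℤ), 1 ≤ K → ∀ (r : ℕ) (ε : ℝ), 0 < ε →
      ∀ hsz : ℤ → ℝ, (∀ k : ℤ, 0 < hsz k) → (∀ k : ℤ, hsz (k + 2 * K) = hsz k) →
        (∀ j : ℤ, (2 * (r : ℝ) + 1) * ε ≤ hsz j) →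
      ∀ ωb g ρ : ℤ → ℝ,
        (∀ j : ℤ, ωb j = (hsz j + hsz (j + 1)) / (2 * (2 * (r : ℝ) + 1))) →
        (∀ j : ℤ, g j = (hsz j + hsz (j + 1)) / 2) →
        -- `ρ = M ω̄ − g` for the periodic tridiagonal exactness matrix `M`
        (∀ j : ℤ, ρ j =
          (((r : ℝ) * ((r : ℝ) + 1) / 2) * ε / hsz j * ωb (j - 1) +
            ((2 * (r : ℝ) + 1) -
              ((r : ℝ) * ((r : ℝ) + 1) / 2) * ε * (1 / hsz j + 1 / hsz (j + 1))) * ωb j +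
            ((r : ℝ) * ((r : ℝ) + 1) / 2) * ε / hsz (j + 1) * ωb (j + 1)) - g j) →
        ((∀ j : ℤ, ρ j =
            (ωb (j - 1) - ωb j) * (((r : ℝ) * ((r : ℝ) + 1) / 2) * ε / hsz j) +
            (ωb (j + 1) - ωb j) * (((r : ℝ) * ((r : ℝ) + 1) / 2) * ε / hsz (j + 1))) ∧
          ((∀ i j : ℤ, hsz i = hsz j) → ∀ j : ℤ, ρ j = 0) ∧
          (r = 0 → ∀ j : ℤ, ρ j = 0) ∧
          ((∀ k : ℤ, κ⁻¹ * hsz (k - 1) ≤ hsz k ∧ hsz k ≤ κ * hsz (k - 1)) →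
            ∀ j : ℤ, |ρ j| ≤ C * ε * (r : ℝ))) := by
  refine ⟨κ, lt_of_lt_of_le one_pos hκ, ?_⟩
  intro K hK r ε hε hsz hpos hper hlb ωb g ρ hω hg hρ
  have hr1 : (0:ℝ) < 2 * (2 * (r : ℝ) + 1) := by positivity
  have hne : ∀ j : ℤ, hsz j ≠ 0 := fun j => (hpos j).ne'
  -- the key identity: (2r+1) * ωb j = g j
  have hkey : ∀ j : ℤ, (2 * (r : ℝ) + 1) * ωb j = g j := by
    intro j
    rw [hω, hg]
    field_simp
  have part1 : ∀ j : ℤ, ρ j =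
      (ωb (j - 1) - ωb j) * (((r : ℝ) * ((r : ℝ) + 1) / 2) * ε / hsz j) +
      (ωb (j + 1) - ωb j) * (((r : ℝ) * ((r : ℝ) + 1) / 2) * ε / hsz (j + 1)) := by
    intro j
    rw [hρ j, ← hkey j]
    have h1 := hne j
    have h2 := hne (j + 1)
    field_simp
    ring
  refine ⟨part1, ?_, ?_, ?_⟩
  · intro huni j
    rw [part1 j]
    have e1 : ωb (j - 1) = ωb j := by rw [hω, hω, huni (j - 1) j, huni (j - 1 + 1) (j + 1)]
    have e2 : ωb (j + 1) = ωb j := by rw [hω, hω, huni (j + 1 + 1) (j + 1), huni (j + 1) j]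
    rw [e1, e2]; ring
  · intro hr0 j
    rw [part1 j, hr0]
    norm_num
  · intro hreg j
    have hκ' : ∀ k : ℤ, hsz k ≤ κ * hsz (k - 1) ∧ hsz (k - 1) ≤ κ * hsz k := by
      intro k
      refine ⟨(hreg k).2, ?_⟩
      have h := (hreg k).1
      have hκ0 : (0:ℝ) < κ := lt_of_lt_of_le one_pos hκ
      rw [inv_mul_le_iff₀ hκ0] at h  -- κ⁻¹ * a ≤ b ↔ a ≤ κ * b ?
      exact h
    rw [part1 j]
    have d1 : ωb (j - 1) - ωb j = (hsz (j - 1) - hsz (j + 1)) / (2 * (2 * (r : ℝ) + 1)) := by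
      rw [hω, hω]
      have : j - 1 + 1 = j := by ring
      rw [this]
      ring
    have d2 : ωb (j + 1) - ωb j = (hsz (j + 1 + 1) - hsz j) / (2 * (2 * (r : ℝ) + 1)) := by
      rw [hω, hω]; ring
    rw [d1, d2]
    have b1 : |(hsz (j - 1) - hsz (j + 1)) / (2 * (2 * (r : ℝ) + 1)) *
        (((r : ℝ) * ((r : ℝ) + 1) / 2) * ε / hsz j)| ≤ κ * ε * (r : ℝ) / 2 := by
      apply key17 κ ε (hsz j) (hsz (j - 1)) (hsz (j + 1)) r hκ hε (hpos j) (hpos _) (hpos _)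
      · have := (hκ' j).2; exact this
      · have := (hκ' (j + 1)).1; simpa using this
    have b2 : |(hsz (j + 1 + 1) - hsz j) / (2 * (2 * (r : ℝ) + 1)) *
        (((r : ℝ) * ((r : ℝ) + 1) / 2) * ε / hsz (j + 1))| ≤ κ * ε * (r : ℝ) / 2 := by
      apply key17 κ ε (hsz (j + 1)) (hsz (j + 1 + 1)) (hsz j) r hκ hε (hpos _) (hpos _) (hpos _)
      · have := (hκ' (j + 1 + 1)).1; simpa using this
      · have := (hκ' (j + 1)).2; simpa using this
    calc |_| ≤ _ := abs_add_le _ _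
      _ ≤ κ * ε * (r : ℝ) / 2 + κ * ε * (r : ℝ) / 2 := add_le_add b1 b2
      _ = κ * ε * (r : ℝ) := by ring
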